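/- A graph is a split graph if and only if it contains no induced subgraph isomorphic to 2K_2, C_4, or C_5. -/

import Mathlib

open SimpleGraph Finset

/-- `s` is an independent set in `G`. -/
def IsIndepSet {α : Type*} (G : SimpleGraph α) (s : Set α) : Prop :=
  s.Pairwise fun a b => ¬ G.Adj a b

/-- `(G, A, B)` is a splitted graph: `A` an independent set and `B` a clique
partitioning the vertex set of `G`. -/
def IsSplitted {α : Type*} (G : SimpleGraph α) (A B : Set α) : Prop :=
  _root_.IsIndepSet G A ∧ G.IsClique B ∧ A ∪ B = Set.univ ∧ Disjoint A B

/-- `G` is a split graph. -/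
def IsSplitGraph {α : Type*} (G : SimpleGraph α) : Prop :=
  ∃ A B : Set α, IsSplitted G A B

/-- Tyshkevich composition `(G, A, B) ∘ H`: the disjoint union of `G` and `H`
together with all edges between the clique `B` and the vertices of `H`. -/
def comp {α β : Type*} (G : SimpleGraph α) (B : Set α) (H : SimpleGraph β) :
    SimpleGraph (α ⊕ β) where
  Adj x y :=
    match x, y with
    | Sum.inl a, Sum.inl a' => G.Adj a a'
    | Sum.inr b, Sum.inr b' => H.Adj b b'
    | Sum.inl a, Sum.inr _ => a ∈ B
    | Sum.inr _, Sum.inl a => a ∈ B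
  symm := ⟨by
    rintro (a | b) (a' | b') h
    · exact G.adj_symm h
    · exact h
    · exact h
    · exact H.adj_symm h⟩
  loopless := ⟨by
    rintro (a | b) h
    · exact G.irrefl h
    · exact H.irrefl h⟩

/-- The degree of a vertex, as the cardinality of its neighborhood. -/
noncomputable def deg {α : Type*} (G : SimpleGraph α) (v : α) : ℕ :=
  (G.neighborSet v).ncard

/-- The disjoint union of two edges. -/
def twoK2 : SimpleGraph (Fin 4) :=
  SimpleGraph.fromRel fun a b => (a.val = 0 ∧ b.val = 1) ∨ (a.val = 2 ∧ b.val = 3)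

/-- The 4-cycle. -/
def cycle4 : SimpleGraph (Fin 4) :=
  SimpleGraph.fromRel fun a b =>
    (a.val = 0 ∧ b.val = 1) ∨ (a.val = 1 ∧ b.val = 2) ∨
    (a.val = 2 ∧ b.val = 3) ∨ (a.val = 3 ∧ b.val = 0)

/-- The path on four vertices. -/
def path4 : SimpleGraph (Fin 4) :=
  SimpleGraph.fromRel fun a b =>
    (a.val = 0 ∧ b.val = 1) ∨ (a.val = 1 ∧ b.val = 2) ∨ (a.val = 2 ∧ b.val = 3)

/-- The 5-cycle. -/
def cycle5 : SimpleGraph (Fin 5) :=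
  SimpleGraph.fromRel fun a b =>
    (a.val = 0 ∧ b.val = 1) ∨ (a.val = 1 ∧ b.val = 2) ∨
    (a.val = 2 ∧ b.val = 3) ∨ (a.val = 3 ∧ b.val = 4) ∨ (a.val = 4 ∧ b.val = 0)

/-! ### Auxiliary material for the proof -/

instance : DecidableRel twoK2.Adj := fun a b =>
  decidable_of_iff _ (SimpleGraph.fromRel_adj _ a b).symm
instance : DecidableRel cycle4.Adj := fun a b =>
  decidable_of_iff _ (SimpleGraph.fromRel_adj _ a b).symm
instance : DecidableRel cycle5.Adj := fun a b =>
  decidable_of_iff _ (SimpleGraph.fromRel_adj _ a b).symm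

lemma pattern_iso {V : Type*} {n : ℕ} (G : SimpleGraph V) (H : SimpleGraph (Fin n))
    (f : Fin n → V) (hf : Function.Injective f)
    (h : ∀ i j, G.Adj (f i) (f j) ↔ H.Adj i j) :
    Nonempty (G.induce (Set.range f) ≃g H) := by
  have key : ∀ a : Set.range f, f ((Equiv.ofInjective f hf).symm a) = ↑a := fun a =>
    congrArg Subtype.val ((Equiv.ofInjective f hf).apply_symm_apply a)
  refine ⟨⟨(Equiv.ofInjective f hf).symm, ?_⟩⟩
  intro a b
  rw [← h]
  simp only [comap_adj, Function.Embedding.coe_subtype, key]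

lemma no2K2 {V : Type*} {G : SimpleGraph V}
    (hfree : ∀ s : Set V, ¬ Nonempty (G.induce s ≃g twoK2))
    {a b c d : V} (hab : G.Adj a b) (hcd : G.Adj c d)
    (hac : ¬ G.Adj a c) (had : ¬ G.Adj a d) (hbc : ¬ G.Adj b c) (hbd : ¬ G.Adj b d) :
    False := by
  have hnac : a ≠ c := fun h => had (h ▸ hcd)
  have hnad : a ≠ d := fun h => hac (h ▸ hcd.symm)
  have hnbc : b ≠ c := fun h => hbd (h ▸ hcd)
  have hnbd : b ≠ d := fun h => hbc (h ▸ hcd.symm)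
  have hnab := hab.ne
  have hncd := hcd.ne
  refine hfree _ (pattern_iso G twoK2 ![a,b,c,d] ?_ ?_)
  · intro i j hij
    fin_cases i <;> fin_cases j <;> simp_all
  · intro i j
    fin_cases i <;> fin_cases j <;>
      first
      | exact iff_of_false G.irrefl (by decide)
      | exact iff_of_true hab (by decide)
      | exact iff_of_true hab.symm (by decide)
      | exact iff_of_true hcd (by decide)
      | exact iff_of_true hcd.symm (by decide)
      | exact iff_of_false hac (by decide)
      | exact iff_of_false had (by decide)
      | exact iff_of_false hbc (by decide)
      | exact iff_of_false hbd (by decide)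
      | exact iff_of_false (fun h => hac h.symm) (by decide)
      | exact iff_of_false (fun h => had h.symm) (by decide)
      | exact iff_of_false (fun h => hbc h.symm) (by decide)
      | exact iff_of_false (fun h => hbd h.symm) (by decide)

lemma noC4 {V : Type*} {G : SimpleGraph V}
    (hfree : ∀ s : Set V, ¬ Nonempty (G.induce s ≃g cycle4))
    {a b c d : V} (hab : G.Adj a b) (hbc : G.Adj b c) (hcd : G.Adj c d) (hda : G.Adj d a)
    (hac : ¬ G.Adj a c) (hbd : ¬ G.Adj b d) (hnac : a ≠ c) (hnbd : b ≠ d) :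
    False := by
  have hnab := hab.ne
  have hnbc := hbc.ne
  have hncd := hcd.ne
  have hnda := hda.ne
  refine hfree _ (pattern_iso G cycle4 ![a,b,c,d] ?_ ?_)
  · intro i j hij
    fin_cases i <;> fin_cases j <;> simp_all
  · intro i j
    fin_cases i <;> fin_cases j <;>
      first
      | exact iff_of_false G.irrefl (by decide)
      | exact iff_of_true hab (by decide)
      | exact iff_of_true hab.symm (by decide)
      | exact iff_of_true hbc (by decide)
      | exact iff_of_true hbc.symm (by decide)
      | exact iff_of_true hcd (by decide)
      | exact iff_of_true hcd.symm (by decide)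
      | exact iff_of_true hda (by decide)
      | exact iff_of_true hda.symm (by decide)
      | exact iff_of_false hac (by decide)
      | exact iff_of_false hbd (by decide)
      | exact iff_of_false (fun h => hac h.symm) (by decide)
      | exact iff_of_false (fun h => hbd h.symm) (by decide)

lemma noC5 {V : Type*} {G : SimpleGraph V}
    (hfree : ∀ s : Set V, ¬ Nonempty (G.induce s ≃g cycle5))
    {a b c d e : V} (hab : G.Adj a b) (hbc : G.Adj b c) (hcd : G.Adj c d)
    (hde : G.Adj d e) (hea : G.Adj e a)
    (hac : ¬ G.Adj a c) (had : ¬ G.Adj a d) (hbd : ¬ G.Adj b d)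
    (hbe : ¬ G.Adj b e) (hce : ¬ G.Adj c e) :
    False := by
  have hnab := hab.ne
  have hnbc := hbc.ne
  have hncd := hcd.ne
  have hnde := hde.ne
  have hnea := hea.ne
  have hnac : a ≠ c := fun h => had (h ▸ hcd)
  have hnad : a ≠ d := fun h => hac (h ▸ hcd.symm)
  have hnbd : b ≠ d := fun h => hbe (h ▸ hde)
  have hnbe : b ≠ e := fun h => hbd (h ▸ hde.symm)
  have hnce : c ≠ e := fun h => hac (by rw [h]; exact hea.symm)
  refine hfree _ (pattern_iso G cycle5 ![a,b,c,d,e] ?_ ?_)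
  · intro i j hij
    fin_cases i <;> fin_cases j <;> simp_all
  · intro i j
    fin_cases i <;> fin_cases j <;>
      first
      | exact iff_of_false G.irrefl (by decide)
      | exact iff_of_true hab (by decide)
      | exact iff_of_true hab.symm (by decide)
      | exact iff_of_true hbc (by decide)
      | exact iff_of_true hbc.symm (by decide)
      | exact iff_of_true hcd (by decide)
      | exact iff_of_true hcd.symm (by decide)
      | exact iff_of_true hde (by decide)
      | exact iff_of_true hde.symm (by decide)
      | exact iff_of_true hea (by decide)
      | exact iff_of_true hea.symm (by decide)
      | exact iff_of_false hac (by decide)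
      | exact iff_of_false had (by decide)
      | exact iff_of_false hbd (by decide)
      | exact iff_of_false hbe (by decide)
      | exact iff_of_false hce (by decide)
      | exact iff_of_false (fun h => hac h.symm) (by decide)
      | exact iff_of_false (fun h => had h.symm) (by decide)
      | exact iff_of_false (fun h => hbd h.symm) (by decide)
      | exact iff_of_false (fun h => hbe h.symm) (by decide)
      | exact iff_of_false (fun h => hce h.symm) (by decide)

lemma split_induce {V : Type*} {G : SimpleGraph V} (h : IsSplitGraph G) (s : Set V) :
    IsSplitGraph (G.induce s) := by
  obtain ⟨A, B, hA, hB, hU, hD⟩ := h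
  refine ⟨Subtype.val ⁻¹' A, Subtype.val ⁻¹' B, ?_, ?_, ?_, ?_⟩
  · intro a ha b hb hne hadj
    exact hA ha hb (fun h => hne (Subtype.ext h)) hadj
  · intro a ha b hb hne
    exact hB ha hb (fun h : (a : V) = b => hne (Subtype.ext h))
  · rw [← Set.preimage_union, hU, Set.preimage_univ]
  · exact Disjoint.preimage _ hD

lemma split_iso {V W : Type*} {G : SimpleGraph V} {H : SimpleGraph W}
    (e : G ≃g H) (h : IsSplitGraph G) : IsSplitGraph H := by
  obtain ⟨A, B, hA, hB, hU, hD⟩ := h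
  refine ⟨⇑e '' A, ⇑e '' B, ?_, ?_, ?_, ?_⟩
  · rintro _ ⟨a, ha, rfl⟩ _ ⟨b, hb, rfl⟩ hne hadj
    exact hA ha hb (fun h => hne (congrArg e h)) (e.map_rel_iff.mp hadj)
  · rintro _ ⟨a, ha, rfl⟩ _ ⟨b, hb, rfl⟩ hne
    exact e.map_rel_iff.mpr (hB ha hb (fun h => hne (congrArg e h)))
  · rw [← Set.image_union, hU, Set.image_univ]
    exact Set.range_eq_univ.mpr e.toEquiv.surjective
  · exact (Set.disjoint_image_iff e.toEquiv.injective).mpr hD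

lemma split_finset_iff {V : Type*} [Fintype V] [DecidableEq V] (G : SimpleGraph V) :
    IsSplitGraph G ↔ ∃ A : Finset V,
      (∀ a ∈ A, ∀ b ∈ A, ¬ G.Adj a b) ∧ (∀ a ∈ Aᶜ, ∀ b ∈ Aᶜ, a ≠ b → G.Adj a b) := by
  classical
  constructor
  · rintro ⟨A, B, hA, hB, hU, hD⟩
    refine ⟨A.toFinset, ?_, ?_⟩
    · intro a ha b hb hadj
      rcases eq_or_ne a b with rfl | hne
      · exact G.irrefl hadj
      · exact hA (Set.mem_toFinset.mp ha) (Set.mem_toFinset.mp hb) hne hadj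
    · intro a ha b hb hne
      have haB : a ∈ B := by
        have : a ∉ A := by simpa using ha
        rcases (Set.mem_union ..).mp (hU ▸ Set.mem_univ a) with h | h
        · exact absurd h ‹a ∉ A›
        · exact h
      have hbB : b ∈ B := by
        have : b ∉ A := by simpa using hb
        rcases (Set.mem_union ..).mp (hU ▸ Set.mem_univ b) with h | h
        · exact absurd h ‹b ∉ A›
        · exact h
      exact hB haB hbB hne
  · rintro ⟨A, h1, h2⟩
    refine ⟨↑A, ↑(Aᶜ), ?_, ?_, ?_, ?_⟩
    · intro a ha b hb hne hadj
      exact h1 a ha b hb hadj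
    · intro a ha b hb hne
      exact h2 a (by simpa using ha) b (by simpa using hb) hne
    · simp [Finset.coe_compl]
    · simp [Finset.coe_compl, Set.disjoint_compl_right_iff_subset]

lemma not_split_twoK2 : ¬ IsSplitGraph twoK2 := by
  rw [split_finset_iff]; decide

lemma not_split_cycle4 : ¬ IsSplitGraph cycle4 := by
  rw [split_finset_iff]; decide

lemma not_split_cycle5 : ¬ IsSplitGraph cycle5 := by
  rw [split_finset_iff]; decide

/-- Find a neighbor of `c` avoiding `N(v)`, given `deg v ≤ deg c` and a
common non-neighbor witness. -/
lemma exists_private_neighbor {V : Type*} [Fintype V] {G : SimpleGraph V} {v c w : V}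
    (hdeg : deg G v ≤ deg G c) (hvw : G.Adj v w) (hcw : ¬ G.Adj c w) :
    ∃ z, G.Adj c z ∧ ¬ G.Adj v z := by
  by_contra hcon
  push_neg at hcon
  have hsub : G.neighborSet c ⊆ G.neighborSet v \ {w} := by
    intro u hu
    refine ⟨hcon u hu, ?_⟩
    simp only [Set.mem_singleton_iff]
    rintro rfl
    exact hcw hu
  have h1 : (G.neighborSet c).ncard ≤ (G.neighborSet v \ {w}).ncard :=
    Set.ncard_le_ncard hsub (Set.toFinite _)
  have h2 : (G.neighborSet v \ {w}).ncard < (G.neighborSet v).ncard :=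
    Set.ncard_diff_singleton_lt_of_mem hvw (Set.toFinite _)
  unfold deg at hdeg
  omega

/-- The core case analysis: `K` a clique that is sufficiently extremal,
`x y` an edge outside `K`, with every `K`-neighbour of `y` a neighbour of `x`.
This is impossible in a `(2K₂, C₄, C₅)`-free graph. -/
lemma aux {V : Type*} [Fintype V] [DecidableEq V] {G : SimpleGraph V}
    (h2 : ∀ s : Set V, ¬ Nonempty (G.induce s ≃g twoK2))
    (h4 : ∀ s : Set V, ¬ Nonempty (G.induce s ≃g cycle4))
    (h5 : ∀ s : Set V, ¬ Nonempty (G.induce s ≃g cycle5))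
    {K : Finset V} (hK : G.IsClique ↑K)
    (hmiss : ∀ v, v ∉ K → ∃ u ∈ K, ¬ G.Adj v u)
    (hswap : ∀ c ∈ K, ∀ v, v ∉ K → (∀ u ∈ K.erase c, G.Adj v u) → deg G v ≤ deg G c)
    {x y : V} (hadj : G.Adj x y) (hx : x ∉ K) (hy : y ∉ K)
    (hY : ∀ u ∈ K, G.Adj y u → G.Adj x u) : False := by
  obtain ⟨c, hc, hxc⟩ := hmiss x hx
  have hyc : ¬ G.Adj y c := fun h => hxc (hY c hc h)
  have hKc : ∀ u ∈ K.erase c, G.Adj x u := by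
    intro u hu
    by_contra hxu
    have huK := Finset.mem_of_mem_erase hu
    have hyu : ¬ G.Adj y u := fun h => hxu (hY u huK h)
    have huc : G.Adj u c := hK (Finset.mem_coe.mpr huK) (Finset.mem_coe.mpr hc)
      (Finset.ne_of_mem_erase hu)
    exact no2K2 h2 hadj huc hxu hxc hyu hyc
  have hdx : deg G x ≤ deg G c := hswap c hc x hx hKc
  obtain ⟨z, hcz, hxz⟩ :=
    exists_private_neighbor hdx hadj (fun h => hyc h.symm)
  have hzx : z ≠ x := fun h => hxc (by rw [← h]; exact hcz.symm)
  have hzy : z ≠ y := fun h => hyc (by rw [← h]; exact hcz.symm)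
  have hzK : z ∉ K := by
    intro hzK
    have hzc : z ≠ c := fun h => (G.irrefl : ¬ G.Adj c c) (by rw [h] at hcz; exact hcz)
    exact hxz (hKc z (Finset.mem_erase.mpr ⟨hzc, hzK⟩))
  by_cases hzy' : G.Adj z y
  · by_cases hKx : ∃ a ∈ K.erase c, ¬ G.Adj y a
    · obtain ⟨a, ha, hya⟩ := hKx
      have haK := Finset.mem_of_mem_erase ha
      have hxa : G.Adj x a := hKc a ha
      have hac : G.Adj a c := hK (Finset.mem_coe.mpr haK) (Finset.mem_coe.mpr hc)
        (Finset.ne_of_mem_erase ha)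
      have hay : ¬ G.Adj a y := fun h => hya h.symm
      have hnay : a ≠ y := fun h => hy (h ▸ haK)
      by_cases haz : G.Adj a z
      · -- C4 : a - x - y - z - a
        exact noC4 h4 hxa.symm hadj hzy'.symm haz.symm hay hxz hnay
          (fun h => hzx h.symm)
      · -- C5 : a - x - y - z - c - a
        exact noC5 h5 hxa.symm hadj hzy'.symm hcz.symm hac.symm hay haz hxz hxc hyc
    · push_neg at hKx
      have hdy : deg G y ≤ deg G c := hswap c hc y hy hKx
      obtain ⟨z', hcz', hyz'⟩ :=
        exists_private_neighbor hdy hadj.symm (fun h => hxc h.symm)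
      have hz'y : z' ≠ y := fun h => hyc (by rw [← h]; exact hcz'.symm)
      by_cases hz'x : G.Adj z' x
      · have hnzz' : z ≠ z' := fun h => hxz (by rw [h]; exact hz'x.symm)
        by_cases hzz' : G.Adj z z'
        · -- C4 : x - y - z - z' - x
          exact noC4 h4 hadj hzy'.symm hzz' hz'x hxz hyz' hzx.symm hz'y.symm
        · -- C5 : x - y - z - c - z' - x
          exact noC5 h5 hadj hzy'.symm hcz.symm hcz' hz'x hxz hxc hyc hyz' hzz'
      · exact no2K2 h2 hadj hcz' hxc (fun h => hz'x h.symm) hyc hyz'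
  · exact no2K2 h2 hadj hcz hxc hxz hyc (fun h => hzy' h.symm)

/-- Földes–Hammer: a graph is split iff it has no induced
subgraph isomorphic to `2K₂`, `C₄`, or `C₅`. -/
theorem stmt10 {V : Type*} [Fintype V] (G : SimpleGraph V) :
    IsSplitGraph G ↔
      ∀ s : Set V, ¬ Nonempty (G.induce s ≃g twoK2) ∧
        ¬ Nonempty (G.induce s ≃g cycle4) ∧ ¬ Nonempty (G.induce s ≃g cycle5) := by
  classical
  constructor
  · intro hsplit s
    exact ⟨fun ⟨e⟩ => not_split_twoK2 (split_iso e (split_induce hsplit s)),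
           fun ⟨e⟩ => not_split_cycle4 (split_iso e (split_induce hsplit s)),
           fun ⟨e⟩ => not_split_cycle5 (split_iso e (split_induce hsplit s))⟩
  · intro hfree
    have h2 : ∀ s : Set V, ¬ Nonempty (G.induce s ≃g twoK2) := fun s => (hfree s).1
    have h4 : ∀ s : Set V, ¬ Nonempty (G.induce s ≃g cycle4) := fun s => (hfree s).2.1
    have h5 : ∀ s : Set V, ¬ Nonempty (G.induce s ≃g cycle5) := fun s => (hfree s).2.2
    set F : Finset V → ℕ := fun K => K.card + ∑ v ∈ K, deg G v with hFdef
    have hne : (Finset.univ.filter fun K : Finset V => G.IsClique (K : Set V)).Nonempty :=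
      ⟨∅, by simp [SimpleGraph.isClique_empty]⟩
    obtain ⟨K, hKmem, hKmax⟩ := Finset.exists_max_image
      (Finset.univ.filter fun K : Finset V => G.IsClique (K : Set V)) F hne
    have hK : G.IsClique (↑K : Set V) := (Finset.mem_filter.mp hKmem).2
    have hmax : ∀ K' : Finset V, G.IsClique (↑K' : Set V) → F K' ≤ F K := fun K' h =>
      hKmax K' (Finset.mem_filter.mpr ⟨Finset.mem_univ _, h⟩)
    have hmiss : ∀ v, v ∉ K → ∃ u ∈ K, ¬ G.Adj v u := by
      intro v hv
      by_contra hcon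
      push_neg at hcon
      have hcl : G.IsClique (↑(insert v K) : Set V) := by
        rw [Finset.coe_insert]
        exact hK.insert (fun b hb _ => hcon b hb)
      have hle := hmax _ hcl
      rw [hFdef] at hle
      simp only [Finset.card_insert_of_notMem hv, Finset.sum_insert hv] at hle
      omega
    have hswap : ∀ c ∈ K, ∀ v, v ∉ K →
        (∀ u ∈ K.erase c, G.Adj v u) → deg G v ≤ deg G c := by
      intro c hc v hv hadj
      have hvK' : v ∉ K.erase c := fun h => hv (Finset.mem_of_mem_erase h)
      have hcl : G.IsClique (↑(insert v (K.erase c)) : Set V) := by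
        rw [Finset.coe_insert]
        refine (hK.subset ?_).insert (fun b hb _ => hadj b hb)
        exact_mod_cast Finset.coe_subset.mpr (Finset.erase_subset c K)
      have hle := hmax _ hcl
      rw [hFdef] at hle
      simp only [Finset.card_insert_of_notMem hvK', Finset.sum_insert hvK',
        Finset.card_erase_of_mem hc] at hle
      have hsum : ∑ u ∈ K.erase c, deg G u + deg G c = ∑ u ∈ K, deg G u :=
        Finset.sum_erase_add _ _ hc
      have hcard : 1 ≤ K.card := Finset.card_pos.mpr ⟨c, hc⟩
      omega
    refine ⟨(↑K : Set V)ᶜ, ↑K, ?_, hK, by simp, disjoint_compl_left⟩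
    intro x hx y hy hxy hadj
    simp only [Set.mem_compl_iff, Finset.mem_coe] at hx hy
    by_cases hcase : ∀ u ∈ K, G.Adj y u → G.Adj x u
    · exact aux h2 h4 h5 hK hmiss hswap hadj hx hy hcase
    · by_cases hcase2 : ∀ u ∈ K, G.Adj x u → G.Adj y u
      · exact aux h2 h4 h5 hK hmiss hswap hadj.symm hy hx hcase2
      · push_neg at hcase hcase2
        obtain ⟨b, hbK, hyb, hxb⟩ := hcase
        obtain ⟨a, haK, hxa, hya⟩ := hcase2
        have hnab : a ≠ b := fun h => hxb (h ▸ hxa)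
        have hab : G.Adj a b := hK (Finset.mem_coe.mpr haK) (Finset.mem_coe.mpr hbK) hnab
        -- C4 : x - a - b - y - x
        exact noC4 h4 hxa hab hyb.symm hadj.symm hxb (fun h => hya h.symm)
          (fun h => hx (h ▸ hbK)) (fun h => hy (h.symm ▸ haK))
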